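/- Let k be a field, T = k[[a,b]]/(a^2 b^2), and A = k[[x,y,u,v]]/(xy, yu, uv, vx, u^2, v^2). Then the k-algebra homomorphism T → A sending a ↦ x + v and b ↦ y + u is well-defined and injective. -/

import Mathlib

set_option synthInstance.maxHeartbeats 400000
set_option maxHeartbeats 1000000

open MvPowerSeries

/-- The ideal `(xy, yu, uv, vx, u², v²)` of `k[[x,y,u,v]]`, where
`x = X 0`, `y = X 1`, `u = X 2`, `v = X 3`. -/
noncomputable def Aideal (k : Type*) [Field k] : Ideal (MvPowerSeries (Fin 4) k) :=
  Ideal.span {(X 0 : MvPowerSeries (Fin 4) k) * X 1,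
    (X 1 : MvPowerSeries (Fin 4) k) * X 2,
    (X 2 : MvPowerSeries (Fin 4) k) * X 3,
    (X 3 : MvPowerSeries (Fin 4) k) * X 0,
    (X 2 : MvPowerSeries (Fin 4) k) ^ 2,
    (X 3 : MvPowerSeries (Fin 4) k) ^ 2}

namespace TAaux

/-- shorthand constructor for `Fin 4 →₀ ℕ` -/
noncomputable def fe4 (a b c d : ℕ) : Fin 4 →₀ ℕ := Finsupp.equivFunOnFinite.symm ![a, b, c, d]

noncomputable def fe2 (a b : ℕ) : Fin 2 →₀ ℕ := Finsupp.equivFunOnFinite.symm ![a, b]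

@[simp] lemma fe4_apply0 (a b c d : ℕ) : fe4 a b c d 0 = a := rfl
@[simp] lemma fe4_apply1 (a b c d : ℕ) : fe4 a b c d 1 = b := rfl
@[simp] lemma fe4_apply2 (a b c d : ℕ) : fe4 a b c d 2 = c := rfl
@[simp] lemma fe4_apply3 (a b c d : ℕ) : fe4 a b c d 3 = d := rfl
@[simp] lemma fe2_apply0 (a b : ℕ) : fe2 a b 0 = a := rfl
@[simp] lemma fe2_apply1 (a b : ℕ) : fe2 a b 1 = b := rfl

lemma fin4_ext {p q : Fin 4 →₀ ℕ} (h0 : p 0 = q 0) (h1 : p 1 = q 1)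
    (h2 : p 2 = q 2) (h3 : p 3 = q 3) : p = q := by
  ext i; fin_cases i <;> assumption

lemma fin2_ext {p q : Fin 2 →₀ ℕ} (h0 : p 0 = q 0) (h1 : p 1 = q 1) : p = q := by
  ext i; fin_cases i <;> assumption

lemma eq_fe4_iff {e : Fin 4 →₀ ℕ} {a b c d : ℕ} :
    e = fe4 a b c d ↔ e 0 = a ∧ e 1 = b ∧ e 2 = c ∧ e 3 = d := by
  constructor
  · rintro rfl; exact ⟨rfl, rfl, rfl, rfl⟩
  · rintro ⟨h0, h1, h2, h3⟩; exact fin4_ext h0 h1 h2 h3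

lemma eq_fe2_iff {e : Fin 2 →₀ ℕ} {a b : ℕ} :
    e = fe2 a b ↔ e 0 = a ∧ e 1 = b := by
  constructor
  · rintro rfl; exact ⟨rfl, rfl⟩
  · rintro ⟨h0, h1⟩; exact fin2_ext h0 h1

lemma le_fin4 {d e : Fin 4 →₀ ℕ} :
    d ≤ e ↔ d 0 ≤ e 0 ∧ d 1 ≤ e 1 ∧ d 2 ≤ e 2 ∧ d 3 ≤ e 3 := by
  rw [Finsupp.le_def]
  exact ⟨fun h => ⟨h 0, h 1, h 2, h 3⟩, fun ⟨h0, h1, h2, h3⟩ i => by fin_cases i <;> assumption⟩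

lemma le_fin2 {d e : Fin 2 →₀ ℕ} : d ≤ e ↔ d 0 ≤ e 0 ∧ d 1 ≤ e 1 := by
  rw [Finsupp.le_def]
  exact ⟨fun h => ⟨h 0, h 1⟩, fun ⟨h0, h1⟩ i => by fin_cases i <;> assumption⟩

def Dpred (e : Fin 4 →₀ ℕ) : Prop :=
  (1 ≤ e 0 ∧ 1 ≤ e 1) ∨ (1 ≤ e 1 ∧ 1 ≤ e 2) ∨ (1 ≤ e 2 ∧ 1 ≤ e 3) ∨
    (1 ≤ e 3 ∧ 1 ≤ e 0) ∨ 2 ≤ e 2 ∨ 2 ≤ e 3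

lemma Dpred_def (e : Fin 4 →₀ ℕ) : Dpred e ↔
    ((1 ≤ e 0 ∧ 1 ≤ e 1) ∨ (1 ≤ e 1 ∧ 1 ≤ e 2) ∨ (1 ≤ e 2 ∧ 1 ≤ e 3) ∨
    (1 ≤ e 3 ∧ 1 ≤ e 0) ∨ 2 ≤ e 2 ∨ 2 ≤ e 3) := Iff.rfl

instance : DecidablePred Dpred := fun e => by unfold Dpred; infer_instance

lemma Dpred_up {p q e : Fin 4 →₀ ℕ} (h : p + q = e) (hq : Dpred q) : Dpred e := by
  have h0 : p 0 + q 0 = e 0 := by rw [← h]; rfl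
  have h1 : p 1 + q 1 = e 1 := by rw [← h]; rfl
  have h2 : p 2 + q 2 = e 2 := by rw [← h]; rfl
  have h3 : p 3 + q 3 = e 3 := by rw [← h]; rfl
  unfold Dpred at hq ⊢; omega

/-- the exponent-collapsing map: `x, v ↦ a`-block and `y, u ↦ b`-block. -/
noncomputable def piMap (e : Fin 4 →₀ ℕ) : Fin 2 →₀ ℕ := fe2 (e 0 + e 3) (e 1 + e 2)

@[simp] lemma piMap_apply0 (e : Fin 4 →₀ ℕ) : piMap e 0 = e 0 + e 3 := rfl
@[simp] lemma piMap_apply1 (e : Fin 4 →₀ ℕ) : piMap e 1 = e 1 + e 2 := rfl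

lemma piMap_add (p q : Fin 4 →₀ ℕ) : piMap (p + q) = piMap p + piMap q := by
  apply fin2_ext <;> simp [piMap, Finsupp.add_apply] <;> ring

variable {k : Type*} [Field k]

/-- The substitution `a ↦ x + v`, `b ↦ y + u`, truncated modulo the ideal. -/
noncomputable def Sfun (f : MvPowerSeries (Fin 2) k) : MvPowerSeries (Fin 4) k :=
  fun e => if Dpred e then 0 else f (piMap e)

@[simp] lemma coeff_Sfun (f : MvPowerSeries (Fin 2) k) (e : Fin 4 →₀ ℕ) :
    coeff e (Sfun f) = if Dpred e then 0 else coeff (piMap e) f := rfl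

/-- the ideal of series supported on `Dpred`. -/
noncomputable def IdealD (k : Type*) [Field k] : Ideal (MvPowerSeries (Fin 4) k) where
  carrier := {f | ∀ e, ¬ Dpred e → coeff e f = 0}
  zero_mem' := fun e _ => map_zero _
  add_mem' := by
    intro a b ha hb e he
    rw [map_add, ha e he, hb e he, add_zero]
  smul_mem' := by
    intro c f hf e he
    rw [smul_eq_mul, coeff_mul]
    apply Finset.sum_eq_zero
    rintro ⟨p, q⟩ hpq
    rw [Finset.HasAntidiagonal.mem_antidiagonal] at hpq
    rw [hf q (fun h => he (Dpred_up hpq h)), mul_zero]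

lemma mem_IdealD {f : MvPowerSeries (Fin 4) k} :
    f ∈ IdealD k ↔ ∀ e, ¬ Dpred e → coeff e f = 0 := Iff.rfl

lemma mem_span_monomial {σ : Type*} [DecidableEq σ] (d : σ →₀ ℕ) (f : MvPowerSeries σ k)
    (h : ∀ e, coeff e f ≠ 0 → d ≤ e) :
    f ∈ Ideal.span {(monomial d 1 : MvPowerSeries σ k)} := by
  refine Ideal.mem_span_singleton.mpr ⟨(fun e => coeff (e + d) f : MvPowerSeries σ k), ?_⟩
  ext e
  erw [coeff_monomial_mul]
  split_ifs with hde
  · rw [one_mul]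
    show coeff e f = coeff (e - d + d) f
    rw [tsub_add_cancel_of_le hde]
  · by_contra hne
    exact hde (h e hne)

lemma gen1 : (X 0 : MvPowerSeries (Fin 4) k) * X 1 = monomial (fe4 1 1 0 0) 1 := by
  have h : Finsupp.single (0 : Fin 4) 1 + Finsupp.single 1 1 = fe4 1 1 0 0 := by
    apply fin4_ext <;> simp [Finsupp.single_apply, Finsupp.add_apply]
  rw [X_def, X_def, monomial_mul_monomial, one_mul, h]

lemma gen2 : (X 1 : MvPowerSeries (Fin 4) k) * X 2 = monomial (fe4 0 1 1 0) 1 := by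
  have h : Finsupp.single (1 : Fin 4) 1 + Finsupp.single 2 1 = fe4 0 1 1 0 := by
    apply fin4_ext <;> simp [Finsupp.single_apply, Finsupp.add_apply]
  rw [X_def, X_def, monomial_mul_monomial, one_mul, h]

lemma gen3 : (X 2 : MvPowerSeries (Fin 4) k) * X 3 = monomial (fe4 0 0 1 1) 1 := by
  have h : Finsupp.single (2 : Fin 4) 1 + Finsupp.single 3 1 = fe4 0 0 1 1 := by
    apply fin4_ext <;> simp [Finsupp.single_apply, Finsupp.add_apply]
  rw [X_def, X_def, monomial_mul_monomial, one_mul, h]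

lemma gen4 : (X 3 : MvPowerSeries (Fin 4) k) * X 0 = monomial (fe4 1 0 0 1) 1 := by
  have h : Finsupp.single (3 : Fin 4) 1 + Finsupp.single 0 1 = fe4 1 0 0 1 := by
    apply fin4_ext <;> simp [Finsupp.single_apply, Finsupp.add_apply]
  rw [X_def, X_def, monomial_mul_monomial, one_mul, h]

lemma gen5 : (X 2 : MvPowerSeries (Fin 4) k) ^ 2 = monomial (fe4 0 0 2 0) 1 := by
  have h : Finsupp.single (2 : Fin 4) 2 = fe4 0 0 2 0 := by
    apply fin4_ext <;> simp [Finsupp.single_apply]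
  rw [X_pow_eq, h]

lemma gen6 : (X 3 : MvPowerSeries (Fin 4) k) ^ 2 = monomial (fe4 0 0 0 2) 1 := by
  have h : Finsupp.single (3 : Fin 4) 2 = fe4 0 0 0 2 := by
    apply fin4_ext <;> simp [Finsupp.single_apply]
  rw [X_pow_eq, h]

lemma genT : (X 0 : MvPowerSeries (Fin 2) k) ^ 2 * X 1 ^ 2 = monomial (fe2 2 2) 1 := by
  have h : Finsupp.single (0 : Fin 2) 2 + Finsupp.single 1 2 = fe2 2 2 := by
    apply fin2_ext <;> simp [Finsupp.single_apply, Finsupp.add_apply]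
  rw [X_pow_eq, X_pow_eq, monomial_mul_monomial, one_mul, h]

lemma Aideal_le_IdealD : Aideal k ≤ IdealD k := by
  rw [Aideal, Ideal.span_le]
  intro g hg
  simp only [Set.mem_insert_iff, Set.mem_singleton_iff] at hg
  have key : ∀ (d : Fin 4 →₀ ℕ), Dpred d →
      (monomial d 1 : MvPowerSeries (Fin 4) k) ∈ IdealD k := by
    intro d hd e he
    rw [coeff_monomial]
    split_ifs with h
    · exact absurd (h ▸ hd) he
    · rfl
  rcases hg with h | h | h | h | h | h <;> subst h
  · rw [gen1]; exact key _ (by rw [Dpred_def]; simp)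
  · rw [gen2]; exact key _ (by rw [Dpred_def]; simp)
  · rw [gen3]; exact key _ (by rw [Dpred_def]; simp)
  · rw [gen4]; exact key _ (by rw [Dpred_def]; simp)
  · rw [gen5]; exact key _ (by rw [Dpred_def]; simp)
  · rw [gen6]; exact key _ (by rw [Dpred_def]; simp)

lemma span_single_le_Aideal {d : Fin 4 →₀ ℕ}
    (hd : (monomial d 1 : MvPowerSeries (Fin 4) k) ∈ Aideal k) {f : MvPowerSeries (Fin 4) k}
    (hf : f ∈ Ideal.span {(monomial d 1 : MvPowerSeries (Fin 4) k)}) : f ∈ Aideal k :=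
  Ideal.span_le.mpr (Set.singleton_subset_iff.mpr hd) hf

lemma IdealD_le_Aideal : IdealD k ≤ Aideal k := by
  intro f hf
  rw [mem_IdealD] at hf
  set f1 : MvPowerSeries (Fin 4) k :=
    fun e => if 1 ≤ e 0 ∧ 1 ≤ e 1 then f e else 0 with hd1
  set f2 : MvPowerSeries (Fin 4) k :=
    fun e => if (1 ≤ e 1 ∧ 1 ≤ e 2) ∧ ¬(1 ≤ e 0 ∧ 1 ≤ e 1) then f e else 0 with hd2
  set f3 : MvPowerSeries (Fin 4) k :=
    fun e => if (1 ≤ e 2 ∧ 1 ≤ e 3) ∧ ¬(1 ≤ e 1 ∧ 1 ≤ e 2) ∧ ¬(1 ≤ e 0 ∧ 1 ≤ e 1) then f e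
      else 0 with hd3
  set f4 : MvPowerSeries (Fin 4) k :=
    fun e => if (1 ≤ e 3 ∧ 1 ≤ e 0) ∧ ¬(1 ≤ e 2 ∧ 1 ≤ e 3) ∧ ¬(1 ≤ e 1 ∧ 1 ≤ e 2) ∧
      ¬(1 ≤ e 0 ∧ 1 ≤ e 1) then f e else 0 with hd4
  set f5 : MvPowerSeries (Fin 4) k :=
    fun e => if 2 ≤ e 2 ∧ ¬(1 ≤ e 3 ∧ 1 ≤ e 0) ∧ ¬(1 ≤ e 2 ∧ 1 ≤ e 3) ∧ ¬(1 ≤ e 1 ∧ 1 ≤ e 2) ∧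
      ¬(1 ≤ e 0 ∧ 1 ≤ e 1) then f e else 0 with hd5
  set f6 : MvPowerSeries (Fin 4) k :=
    fun e => if 2 ≤ e 3 ∧ ¬(2 ≤ e 2) ∧ ¬(1 ≤ e 3 ∧ 1 ≤ e 0) ∧ ¬(1 ≤ e 2 ∧ 1 ≤ e 3) ∧
      ¬(1 ≤ e 1 ∧ 1 ≤ e 2) ∧ ¬(1 ≤ e 0 ∧ 1 ≤ e 1) then f e else 0 with hd6
  have hsum : f = f1 + f2 + f3 + f4 + f5 + f6 := by
    apply MvPowerSeries.ext
    intro e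
    simp only [map_add]; simp only [coeff_apply]; simp only [hd1, hd2, hd3, hd4, hd5, hd6]
    by_cases hD : Dpred e
    · rw [Dpred_def] at hD
      split_ifs <;> (try (exfalso; omega)) <;> simp only [add_zero, zero_add]
    · have h0 : f e = 0 := hf e hD
      have hD' := hD
      rw [Dpred_def] at hD'
      rw [h0]
      split_ifs <;> (try (exfalso; omega)) <;> simp only [add_zero, zero_add]
  have piece : ∀ (d : Fin 4 →₀ ℕ) (g : MvPowerSeries (Fin 4) k),
      (monomial d 1 : MvPowerSeries (Fin 4) k) ∈ Aideal k →
      (∀ e, coeff e g ≠ 0 → d ≤ e) → g ∈ Aideal k := by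
    intro d g hd hg
    exact span_single_le_Aideal hd (mem_span_monomial d g hg)
  have m1 : f1 ∈ Aideal k := by
    refine piece (fe4 1 1 0 0) f1 ?_ ?_
    · rw [← gen1]; exact Ideal.subset_span (by simp)
    · intro e he
      rw [coeff_apply, hd1] at he
      rw [le_fin4]
      simp only [fe4_apply0, fe4_apply1, fe4_apply2, fe4_apply3]
      by_contra hc
      exact he (if_neg (by omega))

  have m2 : f2 ∈ Aideal k := by
    refine piece (fe4 0 1 1 0) f2 ?_ ?_
    · rw [← gen2]; exact Ideal.subset_span (by simp)
    · intro e he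
      rw [coeff_apply, hd2] at he
      rw [le_fin4]
      simp only [fe4_apply0, fe4_apply1, fe4_apply2, fe4_apply3]
      by_contra hc
      exact he (if_neg (by omega))
  have m3 : f3 ∈ Aideal k := by
    refine piece (fe4 0 0 1 1) f3 ?_ ?_
    · rw [← gen3]; exact Ideal.subset_span (by simp)
    · intro e he
      rw [coeff_apply, hd3] at he
      rw [le_fin4]
      simp only [fe4_apply0, fe4_apply1, fe4_apply2, fe4_apply3]
      by_contra hc
      exact he (if_neg (by omega))
  have m4 : f4 ∈ Aideal k := by
    refine piece (fe4 1 0 0 1) f4 ?_ ?_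
    · rw [← gen4]; exact Ideal.subset_span (by simp)
    · intro e he
      rw [coeff_apply, hd4] at he
      rw [le_fin4]
      simp only [fe4_apply0, fe4_apply1, fe4_apply2, fe4_apply3]
      by_contra hc
      exact he (if_neg (by omega))
  have m5 : f5 ∈ Aideal k := by
    refine piece (fe4 0 0 2 0) f5 ?_ ?_
    · rw [← gen5]; exact Ideal.subset_span (by simp)
    · intro e he
      rw [coeff_apply, hd5] at he
      rw [le_fin4]
      simp only [fe4_apply0, fe4_apply1, fe4_apply2, fe4_apply3]
      by_contra hc
      exact he (if_neg (by omega))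
  have m6 : f6 ∈ Aideal k := by
    refine piece (fe4 0 0 0 2) f6 ?_ ?_
    · rw [← gen6]; exact Ideal.subset_span (by simp)
    · intro e he
      rw [coeff_apply, hd6] at he
      rw [le_fin4]
      simp only [fe4_apply0, fe4_apply1, fe4_apply2, fe4_apply3]
      by_contra hc
      exact he (if_neg (by omega))
  rw [hsum]
  exact add_mem (add_mem (add_mem (add_mem (add_mem m1 m2) m3) m4) m5) m6

lemma add_apply4 {p q e : Fin 4 →₀ ℕ} (h : p + q = e) (i : Fin 4) : p i + q i = e i := by
  rw [← h]; rfl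

lemma add_apply2 {p q e : Fin 2 →₀ ℕ} (h : p + q = e) (i : Fin 2) : p i + q i = e i := by
  rw [← h]; rfl

lemma zero_fe4 : (0 : Fin 4 →₀ ℕ) = fe4 0 0 0 0 := fin4_ext rfl rfl rfl rfl
lemma zero_fe2 : (0 : Fin 2 →₀ ℕ) = fe2 0 0 := fin2_ext rfl rfl

lemma mk_eq_mk_of {a b : MvPowerSeries (Fin 4) k}
    (h : ∀ e, ¬ Dpred e → coeff e a = coeff e b) :
    Ideal.Quotient.mk (Aideal k) a = Ideal.Quotient.mk (Aideal k) b := by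
  rw [Ideal.Quotient.eq]
  apply IdealD_le_Aideal
  intro e he
  rw [map_sub, h e he, sub_self]

/-- partial inverse to `piMap` relative to an exponent `e` -/
noncomputable def lift4 (e : Fin 4 →₀ ℕ) (m : Fin 2 →₀ ℕ) : Fin 4 →₀ ℕ :=
  fe4 (min (m 0) (e 0)) (min (m 1) (e 1)) (m 1 - min (m 1) (e 1)) (m 0 - min (m 0) (e 0))


lemma lift4_spec {e : Fin 4 →₀ ℕ} (he : ¬ Dpred e) {q1 q2 : Fin 2 →₀ ℕ}
    (hq : q1 + q2 = piMap e) :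
    lift4 e q1 ≤ e ∧ piMap (lift4 e q1) = q1 ∧ piMap (e - lift4 e q1) = q2 := by
  have he' := he
  rw [Dpred_def] at he'
  have hq0 : q1 0 + q2 0 = e 0 + e 3 := by rw [← piMap_apply0 e, ← hq]; rfl
  have hq1 : q1 1 + q2 1 = e 1 + e 2 := by rw [← piMap_apply1 e, ← hq]; rfl
  have hle : lift4 e q1 ≤ e := by
    rw [le_fin4, lift4]
    simp only [fe4_apply0, fe4_apply1, fe4_apply2, fe4_apply3]
    omega
  refine ⟨hle, ?_, ?_⟩
  · apply fin2_ext
    · rw [piMap_apply0, lift4]; simp only [fe4_apply0, fe4_apply3]; omega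
    · rw [piMap_apply1, lift4]; simp only [fe4_apply1, fe4_apply2]; omega
  · apply fin2_ext
    · rw [piMap_apply0, Finsupp.tsub_apply, Finsupp.tsub_apply, lift4]
      simp only [fe4_apply0, fe4_apply3]
      omega
    · rw [piMap_apply1, Finsupp.tsub_apply, Finsupp.tsub_apply, lift4]
      simp only [fe4_apply1, fe4_apply2]
      omega

lemma Sfun_mul (f g : MvPowerSeries (Fin 2) k) {e : Fin 4 →₀ ℕ} (he : ¬ Dpred e) :
    coeff (piMap e) (f * g) =
      coeff e (Sfun f * Sfun g) := by
  rw [coeff_mul, coeff_mul]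
  have hcl : ∀ p : (Fin 4 →₀ ℕ) × (Fin 4 →₀ ℕ), p ∈ Finset.HasAntidiagonal.antidiagonal e →
      coeff p.1 (Sfun f) * coeff p.2 (Sfun g) =
        coeff (piMap p.1) f * coeff (piMap p.2) g := by
    intro p hp
    rw [Finset.HasAntidiagonal.mem_antidiagonal] at hp
    have h1 : ¬ Dpred p.1 := fun h => he (Dpred_up (by rw [add_comm]; exact hp) h)
    have h2 : ¬ Dpred p.2 := fun h => he (Dpred_up hp h)
    rw [coeff_Sfun, coeff_Sfun, if_neg h1, if_neg h2]
  rw [Finset.sum_congr rfl hcl]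
  apply Finset.sum_nbij' (i := fun q => (lift4 e q.1, e - lift4 e q.1))
    (j := fun p => (piMap p.1, piMap p.2))
  · intro q hq
    rw [Finset.HasAntidiagonal.mem_antidiagonal] at hq ⊢
    exact add_tsub_cancel_of_le (lift4_spec he hq).1
  · intro p hp
    rw [Finset.HasAntidiagonal.mem_antidiagonal] at hp ⊢
    rw [← piMap_add, hp]
  · intro q hq
    rw [Finset.HasAntidiagonal.mem_antidiagonal] at hq
    obtain ⟨-, c1, c2⟩ := lift4_spec he hq
    simp only [c1, c2]
  · intro p hp
    rw [Finset.HasAntidiagonal.mem_antidiagonal] at hp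
    have h0 := add_apply4 hp 0
    have h1 := add_apply4 hp 1
    have h2 := add_apply4 hp 2
    have h3 := add_apply4 hp 3
    have he' := he
    rw [Dpred_def] at he'
    have c1 : lift4 e (piMap p.1) = p.1 := by
      apply fin4_ext <;>
        (rw [lift4]
         simp only [fe4_apply0, fe4_apply1, fe4_apply2, fe4_apply3, piMap_apply0, piMap_apply1]
         omega)
    rw [c1]
    have c2 : e - p.1 = p.2 := by
      rw [← hp]; exact add_tsub_cancel_left p.1 p.2
    rw [c2]
  · intro q hq
    rw [Finset.HasAntidiagonal.mem_antidiagonal] at hq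
    obtain ⟨-, c1, c2⟩ := lift4_spec he hq
    simp only [c1, c2]

lemma piMap_eq_zero_iff {e : Fin 4 →₀ ℕ} : piMap e = 0 ↔ e = 0 := by
  rw [zero_fe2, eq_fe2_iff, zero_fe4, eq_fe4_iff, piMap_apply0, piMap_apply1]
  omega

noncomputable def qhom : MvPowerSeries (Fin 2) k →ₐ[k] (MvPowerSeries (Fin 4) k ⧸ Aideal k) where
  toFun f := Ideal.Quotient.mk _ (Sfun f)
  map_one' := by
    rw [← map_one (Ideal.Quotient.mk (Aideal k))]
    apply mk_eq_mk_of
    intro e he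
    rw [coeff_Sfun, if_neg he, coeff_one, coeff_one, if_congr piMap_eq_zero_iff rfl rfl]
  map_mul' := fun f g => by
    show Ideal.Quotient.mk _ (Sfun (f * g)) =
      Ideal.Quotient.mk _ (Sfun f) * Ideal.Quotient.mk _ (Sfun g)
    rw [← map_mul]
    apply mk_eq_mk_of
    intro e he
    rw [coeff_Sfun, if_neg he]
    exact Sfun_mul f g he
  map_zero' := by
    show Ideal.Quotient.mk _ (Sfun (0 : MvPowerSeries (Fin 2) k)) = 0
    have h : Sfun (0 : MvPowerSeries (Fin 2) k) = 0 := by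
      apply MvPowerSeries.ext; intro e
      rw [coeff_Sfun]
      simp
    rw [h, map_zero]
  map_add' := fun f g => by
    show Ideal.Quotient.mk _ (Sfun (f + g)) =
      Ideal.Quotient.mk _ (Sfun f) + Ideal.Quotient.mk _ (Sfun g)
    have h : Sfun (f + g) = Sfun f + Sfun g := by
      apply MvPowerSeries.ext; intro e
      rw [map_add, coeff_Sfun, coeff_Sfun, coeff_Sfun, map_add]
      split_ifs <;> simp
    rw [h, map_add]
  commutes' := fun c => by
    have h2 : algebraMap k (MvPowerSeries (Fin 4) k ⧸ Aideal k) c =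
        Ideal.Quotient.mk (Aideal k) (algebraMap k (MvPowerSeries (Fin 4) k) c) := rfl
    show Ideal.Quotient.mk _ (Sfun (algebraMap k (MvPowerSeries (Fin 2) k) c)) = _
    rw [h2]
    apply mk_eq_mk_of
    intro e he
    rw [coeff_Sfun, if_neg he, MvPowerSeries.algebraMap_apply,
      MvPowerSeries.algebraMap_apply, coeff_C, coeff_C,
      if_congr piMap_eq_zero_iff rfl rfl]

lemma qhom_apply (f : MvPowerSeries (Fin 2) k) :
    qhom (k := k) f = Ideal.Quotient.mk (Aideal k) (Sfun f) := rfl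

lemma sX02 : Finsupp.single (0 : Fin 2) 1 = fe2 1 0 := by
  apply fin2_ext <;> simp [Finsupp.single_apply]

lemma sX12 : Finsupp.single (1 : Fin 2) 1 = fe2 0 1 := by
  apply fin2_ext <;> simp [Finsupp.single_apply]

lemma sX04 : Finsupp.single (0 : Fin 4) 1 = fe4 1 0 0 0 := by
  apply fin4_ext <;> simp [Finsupp.single_apply]

lemma sX14 : Finsupp.single (1 : Fin 4) 1 = fe4 0 1 0 0 := by
  apply fin4_ext <;> simp [Finsupp.single_apply]

lemma sX24 : Finsupp.single (2 : Fin 4) 1 = fe4 0 0 1 0 := by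
  apply fin4_ext <;> simp [Finsupp.single_apply]

lemma sX34 : Finsupp.single (3 : Fin 4) 1 = fe4 0 0 0 1 := by
  apply fin4_ext <;> simp [Finsupp.single_apply]

lemma Sfun_X0 : Sfun (X 0 : MvPowerSeries (Fin 2) k) =
    (X 0 : MvPowerSeries (Fin 4) k) + X 3 := by
  apply MvPowerSeries.ext; intro e
  rw [map_add, coeff_Sfun, X_def, X_def, X_def, coeff_monomial, coeff_monomial, coeff_monomial,
    sX02, sX04, sX34]
  simp only [Dpred_def, eq_fe4_iff, eq_fe2_iff, piMap_apply0, piMap_apply1]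
  split_ifs <;> first | (exfalso; omega) | norm_num

lemma Sfun_X1 : Sfun (X 1 : MvPowerSeries (Fin 2) k) =
    (X 1 : MvPowerSeries (Fin 4) k) + X 2 := by
  apply MvPowerSeries.ext; intro e
  rw [map_add, coeff_Sfun, X_def, X_def, X_def, coeff_monomial, coeff_monomial, coeff_monomial,
    sX12, sX14, sX24]
  simp only [Dpred_def, eq_fe4_iff, eq_fe2_iff, piMap_apply0, piMap_apply1]
  split_ifs <;> first | (exfalso; omega) | norm_num

lemma qhom_gen_zero : qhom (k := k) ((X 0 : MvPowerSeries (Fin 2) k) ^ 2 * X 1 ^ 2) = 0 := by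
  rw [qhom_apply, genT, Ideal.Quotient.eq_zero_iff_mem]
  apply IdealD_le_Aideal
  intro e he
  rw [coeff_Sfun, if_neg he, coeff_monomial]
  split_ifs with h
  · exfalso
    apply he
    have h0 : e 0 + e 3 = 2 := by rw [← piMap_apply0 e, h]; rfl
    have h1 : e 1 + e 2 = 2 := by rw [← piMap_apply1 e, h]; rfl
    rw [Dpred_def]
    omega
  · rfl

lemma inj_aux {f : MvPowerSeries (Fin 2) k}
    (hx : Sfun f ∈ Aideal k) :
    f ∈ Ideal.span {(X 0 : MvPowerSeries (Fin 2) k) ^ 2 * X 1 ^ 2} := by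
  have hx' := Aideal_le_IdealD hx
  rw [mem_IdealD] at hx'
  have key : ∀ e : Fin 4 →₀ ℕ, ¬ Dpred e → coeff (piMap e) f = 0 := by
    intro e he
    have h := hx' e he
    rwa [coeff_Sfun, if_neg he] at h
  have hsupp : ∀ m : Fin 2 →₀ ℕ, coeff m f ≠ 0 → fe2 2 2 ≤ m := by
    intro m hm
    rw [le_fin2]
    simp only [fe2_apply0, fe2_apply1]
    by_contra hc
    apply hm
    have hcases : m 1 = 0 ∨ m 0 = 0 ∨ (m 0 = 1 ∧ 1 ≤ m 1) ∨ (m 1 = 1 ∧ 1 ≤ m 0) := by omega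
    rcases hcases with h | h | h | h
    · have hres := key (fe4 (m 0) 0 0 0)
        (by rw [Dpred_def]; simp only [fe4_apply0, fe4_apply1, fe4_apply2, fe4_apply3]; omega)
      rwa [show piMap (fe4 (m 0) 0 0 0) = m from by
        apply fin2_ext
        · rw [piMap_apply0]; simp
        · rw [piMap_apply1]; simp [h.symm]] at hres
    · have hres := key (fe4 0 (m 1) 0 0)
        (by rw [Dpred_def]; simp only [fe4_apply0, fe4_apply1, fe4_apply2, fe4_apply3]; omega)
      rwa [show piMap (fe4 0 (m 1) 0 0) = m from by
        apply fin2_ext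
        · rw [piMap_apply0]; simp [h.symm]
        · rw [piMap_apply1]; simp] at hres
    · have hres := key (fe4 0 (m 1) 0 1)
        (by rw [Dpred_def]; simp only [fe4_apply0, fe4_apply1, fe4_apply2, fe4_apply3]; omega)
      rwa [show piMap (fe4 0 (m 1) 0 1) = m from by
        apply fin2_ext
        · rw [piMap_apply0]; simp [h.1.symm]
        · rw [piMap_apply1]; simp] at hres
    · have hres := key (fe4 (m 0) 0 1 0)
        (by rw [Dpred_def]; simp only [fe4_apply0, fe4_apply1, fe4_apply2, fe4_apply3]; omega)
      rwa [show piMap (fe4 (m 0) 0 1 0) = m from by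
        apply fin2_ext
        · rw [piMap_apply0]; simp
        · rw [piMap_apply1]; simp [h.1.symm]] at hres
  have hmem := mem_span_monomial (fe2 2 2) f hsupp
  rwa [← genT] at hmem

end TAaux

/-- Let `k` be a field, `T = k[[a,b]]/(a²b²)` and
`A = k[[x,y,u,v]]/(xy, yu, uv, vx, u², v²)`.  Then the `k`-algebra homomorphism `T → A`
sending `a ↦ x + v` and `b ↦ y + u` is well-defined (i.e. exists) and injective. -/
theorem T_to_A_welldefined_injective (k : Type*) [Field k] :
    ∃ φ : (MvPowerSeries (Fin 2) k ⧸
        Ideal.span {(X 0 : MvPowerSeries (Fin 2) k) ^ 2 * X 1 ^ 2}) →ₐ[k]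
      (MvPowerSeries (Fin 4) k ⧸ Aideal k),
      φ (Ideal.Quotient.mk _ (X 0)) =
        Ideal.Quotient.mk _ (X 0) + Ideal.Quotient.mk _ (X 3) ∧
      φ (Ideal.Quotient.mk _ (X 1)) =
        Ideal.Quotient.mk _ (X 1) + Ideal.Quotient.mk _ (X 2) ∧
      Function.Injective φ := by
  classical
  have hker : ∀ a ∈ Ideal.span {(X 0 : MvPowerSeries (Fin 2) k) ^ 2 * X 1 ^ 2},
      TAaux.qhom (k := k) a = 0 := by
    intro a ha
    have hle : Ideal.span {(X 0 : MvPowerSeries (Fin 2) k) ^ 2 * X 1 ^ 2} ≤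
        RingHom.ker (TAaux.qhom (k := k)) := by
      rw [Ideal.span_le, Set.singleton_subset_iff]
      exact RingHom.mem_ker.mpr TAaux.qhom_gen_zero
    exact RingHom.mem_ker.mp (hle ha)
  refine ⟨Ideal.Quotient.liftₐ _ (TAaux.qhom (k := k)) hker, ?_, ?_, ?_⟩
  · rw [Ideal.Quotient.liftₐ_apply]
    show TAaux.qhom (k := k) (X 0) = _
    rw [TAaux.qhom_apply, TAaux.Sfun_X0, map_add]
  · rw [Ideal.Quotient.liftₐ_apply]
    show TAaux.qhom (k := k) (X 1) = _
    rw [TAaux.qhom_apply, TAaux.Sfun_X1, map_add]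
  · rw [injective_iff_map_eq_zero]
    intro x hx
    obtain ⟨f, rfl⟩ := Ideal.Quotient.mk_surjective x
    rw [Ideal.Quotient.liftₐ_apply] at hx
    have hx' : TAaux.qhom (k := k) f = 0 := hx
    rw [TAaux.qhom_apply, Ideal.Quotient.eq_zero_iff_mem] at hx'
    exact Ideal.Quotient.eq_zero_iff_mem.mpr (TAaux.inj_aux hx')
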